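/- Let ω be an analytic self-map of the unit disk with Taylor coefficients cₙ (n ≥ 0). Then Σ_{n≥1} n|cₙ| rⁿ + Σ_{n≥0} |cₙ| rⁿ ≤ 1 for all 0 ≤ r ≤ 1 − √(2/3). -/

import Mathlib

open Filter Topology Finset

private lemma summable_norm_mul_pow {c : ℕ → ℂ}
    (hw : ∀ z ∈ Metric.ball (0:ℂ) 1, Summable (fun n : ℕ => c n * z ^ n))
    {r : ℝ} (hr0 : 0 ≤ r) (hr1 : r < 1) :
    Summable (fun n => ‖c n‖ * r ^ n) := by
  obtain ⟨σ, hσ0, hσ1, hrσ⟩ : ∃ σ : ℝ, 0 < σ ∧ σ < 1 ∧ r < σ :=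
    ⟨(1 + r) / 2, by linarith, by linarith, by linarith⟩
  have hmem : ((σ : ℝ) : ℂ) ∈ Metric.ball (0:ℂ) 1 := by
    simp only [Metric.mem_ball, dist_zero_right, Complex.norm_real, Real.norm_eq_abs]
    rw [abs_of_pos hσ0]; exact hσ1
  have h1 : Filter.Tendsto (fun n => ‖c n * (σ:ℂ) ^ n‖) atTop (𝓝 0) := by
    simpa using (hw _ hmem).tendsto_atTop_zero.norm
  obtain ⟨C, hC⟩ := h1.bddAbove_range
  have hC' : ∀ n : ℕ, ‖c n‖ * σ ^ n ≤ C := by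
    intro n
    have := hC (Set.mem_range_self n)
    simpa [norm_mul, norm_pow, Complex.norm_real, abs_of_pos hσ0] using this
  have hgeo : Summable (fun n : ℕ => C * (r / σ) ^ n) :=
    (summable_geometric_of_lt_one (by positivity) (by
      rw [div_lt_one hσ0]; exact hrσ)).mul_left C
  refine Summable.of_nonneg_of_le (fun n => by positivity) (fun n => ?_) hgeo
  have : ‖c n‖ * r ^ n = (‖c n‖ * σ ^ n) * (r / σ) ^ n := by
    rw [div_pow, mul_assoc, mul_comm ((σ:ℝ)^n), div_mul_cancel₀ _ (pow_ne_zero n hσ0.ne')]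
  rw [this]
  exact mul_le_mul_of_nonneg_right (hC' n) (by positivity)

private lemma geom_sum_root {N : ℕ} (hN : N ≠ 0) (m : ℕ) :
    ∑ j ∈ Finset.range N, (Complex.exp (2 * Real.pi * Complex.I / N)) ^ (j * m)
      = if N ∣ m then (N : ℂ) else 0 := by
  set ζ : ℂ := Complex.exp (2 * Real.pi * Complex.I / N) with hζ
  have hprim := Complex.isPrimitiveRoot_exp N hN
  have h1 : ∀ j : ℕ, ζ ^ (j * m) = (ζ ^ m) ^ j := fun j => by
    rw [← pow_mul, Nat.mul_comm]
  simp only [h1]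
  by_cases h : N ∣ m
  · have : ζ ^ m = 1 := (hprim.pow_eq_one_iff_dvd m).2 h
    simp [this, h]
  · have hne : ζ ^ m ≠ 1 := fun hh => h ((hprim.pow_eq_one_iff_dvd m).1 hh)
    rw [geom_sum_eq hne, if_neg h]
    have hNpow : (ζ ^ m) ^ N = 1 := by
      rw [← pow_mul, mul_comm, pow_mul, hprim.pow_eq_one, one_pow]
    rw [hNpow]; simp

private lemma dvd_shift {N n k : ℕ} (hn : 0 < n) (hnN : n < N) (hk : k < N - n) :
    (N ∣ (k + n * (N - 1))) ↔ k = n := by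
  have hkey : (↑(k + n * (N - 1)) : ℤ) = ((k : ℤ) - n) + n * N := by
    push_cast [Nat.cast_sub (by omega : 1 ≤ N)]; ring
  rw [← Int.natCast_dvd_natCast, hkey]
  constructor
  · intro h
    have h2 : (N : ℤ) ∣ ((k : ℤ) - n) := by
      have : (N:ℤ) ∣ (n * N) := ⟨n, mul_comm _ _⟩
      exact (dvd_add_right this).mp (by rwa [add_comm] at h)
    have h3 : ((k : ℤ) - n) = 0 :=
      Int.eq_zero_of_abs_lt_dvd h2 (by rw [abs_sub_lt_iff]; omega)
    omega
  · intro h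
    rw [h]
    have h4 : ((n:ℤ) - n) + n * N = n * N := by ring
    rw [h4]
    exact ⟨n, mul_comm _ _⟩
set_option maxHeartbeats 1000000 in
private lemma carath_key {w : ℂ → ℂ} {c : ℕ → ℂ}
    (hw : ∀ z ∈ Metric.ball (0:ℂ) 1, HasSum (fun n : ℕ => c n * z ^ n) (w z))
    (hb : ∀ z ∈ Metric.ball (0:ℂ) 1, ‖w z‖ ≤ 1)
    {n : ℕ} (hn : 1 ≤ n) {r : ℝ} (hr0 : 0 ≤ r) (hr1 : r < 1)
    {μ l : ℂ} (hμ : ‖μ‖ = 1) (hl : ‖l‖ = 1)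
    (hμc : μ * c 0 = (‖c 0‖ : ℂ))
    (hlc : (starRingEnd ℂ) l * (μ * c n) = (‖c n‖ : ℂ))
    {N : ℕ} (hN : 2 * n < N) :
    ‖c n‖ * r ^ n ≤ 2 * (1 - ‖c 0‖)
      + 8 * ∑' j : ℕ, (1 + ‖c (j + (N - n))‖) * r ^ (j + (N - n)) := by
  have hNpos : 0 < N := by omega
  have hnN : n < N := by omega
  have hNR : (0:ℝ) < N := by exact_mod_cast hNpos
  set ζ : ℂ := Complex.exp (2 * Real.pi * Complex.I / N) with hζdef
  have hprim := Complex.isPrimitiveRoot_exp N hNpos.ne'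
  have hζN : ζ ^ N = 1 := hprim.pow_eq_one
  have hζnorm : ‖ζ‖ = 1 := by
    have h : (2 * (Real.pi:ℂ) * Complex.I / N) = ((2 * Real.pi / N : ℝ) : ℂ) * Complex.I := by
      push_cast; ring
    rw [hζdef, h, Complex.norm_exp_ofReal_mul_I]
  have hζ0 : ζ ≠ 0 := Complex.exp_ne_zero _
  have hSu : ∀ m : ℕ, ∑ j ∈ Finset.range N, ζ ^ (j * m) = if N ∣ m then (N : ℂ) else 0 :=
    fun m => geom_sum_root hNpos.ne' m
  have hnd : ∀ m : ℕ, 0 < m → m < N → ¬ (N ∣ m) := fun m h1 h2 =>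
    Nat.not_dvd_of_pos_of_lt h1 h2
  have hconj : (starRingEnd ℂ) ζ = ζ ^ (N - 1) := by
    have h1 : ζ ^ (N - 1) * ζ = 1 := by
      rw [← pow_succ, Nat.sub_add_cancel hNpos]; exact hζN
    have h2 : (starRingEnd ℂ) ζ * ζ = 1 := by
      rw [mul_comm, Complex.mul_conj, Complex.normSq_eq_norm_sq, hζnorm]
      norm_num
    exact mul_right_cancel₀ hζ0 (h2.trans h1.symm)
  -- weights
  set W : ℕ → ℝ := fun j => 1 + (l * ζ ^ (j * n)).re with hWdef
  have hWnorm : ∀ j : ℕ, ‖l * ζ ^ (j * n)‖ = 1 := by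
    intro j; rw [norm_mul, norm_pow, hζnorm, one_pow, mul_one, hl]
  have hWrange : ∀ j : ℕ, 0 ≤ W j ∧ W j ≤ 2 := by
    intro j
    have h1 : |(l * ζ ^ (j * n)).re| ≤ 1 := by
      rw [← hWnorm j]; exact Complex.abs_re_le_norm _
    rw [abs_le] at h1
    constructor <;> simp only [hWdef] <;> linarith [h1.1, h1.2]
  have hmemb : ∀ j : ℕ, ((r:ℂ) * ζ ^ j) ∈ Metric.ball (0:ℂ) 1 := by
    intro j
    simp only [Metric.mem_ball, dist_zero_right, norm_mul, norm_pow, hζnorm, one_pow,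
      mul_one, Complex.norm_real, Real.norm_eq_abs]
    rwa [abs_of_nonneg hr0]
  -- the shifted coefficients
  set p : ℕ → ℂ := fun k => (if k = 0 then (1:ℂ) else 0) - μ * c k with hpdef
  have hps : ∀ z ∈ Metric.ball (0:ℂ) 1, HasSum (fun k => p k * z ^ k) (1 - μ * w z) := by
    intro z hz
    have h1 : HasSum (fun k : ℕ => (if k = 0 then (1:ℂ) else 0) * z ^ k) 1 := by
      have := hasSum_single (f := fun k : ℕ => (if k = 0 then (1:ℂ) else 0) * z ^ k) 0
        (fun b hb => by simp [hb])
      simpa using this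
    have h2 := (hw z hz).mul_left μ
    have h3 := h1.sub h2
    have heq : (fun k => p k * z ^ k)
        = (fun k : ℕ => (if k = 0 then (1:ℂ) else 0) * z ^ k - μ * (c k * z ^ k)) := by
      funext k; simp only [hpdef]; ring
    rw [heq]; exact h3
  have hpnorm : ∀ k : ℕ, ‖p k‖ ≤ 1 + ‖c k‖ := by
    intro k
    refine (norm_sub_le _ _).trans ?_
    have h1 : ‖(if k = 0 then (1:ℂ) else 0)‖ ≤ 1 := by split <;> simp
    have h2 : ‖μ * c k‖ = ‖c k‖ := by rw [norm_mul, hμ, one_mul]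
    rw [h2]; linarith
  -- HasSum for each j with the weight
  have hjsum : ∀ j : ℕ, HasSum (fun k => p k * (r:ℂ) ^ k * ζ ^ (j * k) * ((W j : ℝ) : ℂ))
      ((1 - μ * w ((r:ℂ) * ζ ^ j)) * ((W j : ℝ) : ℂ)) := by
    intro j
    have h1 := (hps _ (hmemb j)).mul_right ((W j : ℝ) : ℂ)
    have heq : (fun k => p k * (r:ℂ) ^ k * ζ ^ (j * k) * ((W j : ℝ) : ℂ))
        = (fun k => p k * ((r:ℂ) * ζ ^ j) ^ k * ((W j : ℝ) : ℂ)) := by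
      funext k
      rw [mul_pow, ← pow_mul]
      ring
    rw [heq]; exact h1
  set U : ℕ → ℂ := fun k => ∑ j ∈ Finset.range N, ζ ^ (j * k) * ((W j : ℝ) : ℂ) with hUdef
  set T : ℂ := ∑ j ∈ Finset.range N, (1 - μ * w ((r:ℂ) * ζ ^ j)) * ((W j : ℝ) : ℂ) with hTdef
  have hsum_main : HasSum (fun k => p k * (r:ℂ) ^ k * U k) T := by
    have h1 := hasSum_sum (s := Finset.range N)
      (f := fun j k => p k * (r:ℂ) ^ k * ζ ^ (j * k) * ((W j : ℝ) : ℂ))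
      (a := fun j => (1 - μ * w ((r:ℂ) * ζ ^ j)) * ((W j : ℝ) : ℂ))
      (fun j _ => hjsum j)
    have heq : (fun k => ∑ j ∈ Finset.range N, p k * (r:ℂ) ^ k * ζ ^ (j * k) * ((W j : ℝ) : ℂ))
        = (fun k => p k * (r:ℂ) ^ k * U k) := by
      funext k
      simp only [hUdef, Finset.mul_sum]
      exact Finset.sum_congr rfl fun j _ => by ring
    rw [← heq]; exact h1
  have hTre : 0 ≤ T.re := by
    rw [hTdef, Complex.re_sum]
    refine Finset.sum_nonneg fun j _ => ?_
    have hre : ((1 - μ * w ((r:ℂ) * ζ ^ j)) * ((W j : ℝ) : ℂ)).re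
        = (1 - μ * w ((r:ℂ) * ζ ^ j)).re * W j := by
      rw [mul_comm, Complex.re_ofReal_mul]; ring
    rw [hre]
    refine mul_nonneg ?_ (hWrange j).1
    have h1 : (μ * w ((r:ℂ) * ζ ^ j)).re ≤ 1 := by
      refine (Complex.re_le_norm _).trans ?_
      rw [norm_mul, hμ, one_mul]
      exact hb _ (hmemb j)
    simp only [Complex.sub_re, Complex.one_re]
    linarith
  -- evaluation of U
  have hUeq : ∀ k : ℕ, U k = (∑ j ∈ Finset.range N, ζ ^ (j * k))
      + (l / 2) * (∑ j ∈ Finset.range N, ζ ^ (j * (k + n)))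
      + ((starRingEnd ℂ) l / 2) * (∑ j ∈ Finset.range N, ζ ^ (j * (k + n * (N - 1)))) := by
    intro k
    simp only [hUdef, Finset.mul_sum, ← Finset.sum_add_distrib]
    refine Finset.sum_congr rfl fun j _ => ?_
    have hre : ((W j : ℝ) : ℂ) = 1 + (l * ζ ^ (j * n) + (starRingEnd ℂ) (l * ζ ^ (j * n))) / 2 := by
      simp only [hWdef]
      rw [Complex.ofReal_add, Complex.ofReal_one, Complex.re_eq_add_conj]
    rw [hre]
    have hc2 : (starRingEnd ℂ) (l * ζ ^ (j * n)) = (starRingEnd ℂ) l * ζ ^ ((N - 1) * (j * n)) := by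
      rw [map_mul, map_pow, hconj, ← pow_mul]
    rw [hc2, show j * (k + n) = j * k + j * n from by ring,
      show j * (k + n * (N - 1)) = j * k + (N - 1) * (j * n) from by ring,
      pow_add, pow_add]
    ring
  have hU0 : U 0 = (N : ℂ) := by
    rw [hUeq 0, hSu 0, hSu (0 + n), hSu (0 + n * (N - 1))]
    rw [if_pos (dvd_zero N), if_neg (hnd _ (by omega) (by omega)),
      if_neg (by rw [dvd_shift (by omega) hnN (by omega)]; omega)]
    ring
  have hUn : U n = (N : ℂ) * (starRingEnd ℂ) l / 2 := by
    rw [hUeq n, hSu n, hSu (n + n), hSu (n + n * (N - 1))]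
    rw [if_neg (hnd _ (by omega) hnN), if_neg (hnd _ (by omega) (by omega)),
      if_pos ((dvd_shift (by omega) hnN (by omega)).mpr rfl)]
    ring
  have hUk : ∀ k : ℕ, 0 < k → k < N - n → k ≠ n → U k = 0 := by
    intro k hk0 hk hkn
    rw [hUeq k, hSu k, hSu (k + n), hSu (k + n * (N - 1))]
    rw [if_neg (hnd _ hk0 (by omega)), if_neg (hnd _ (by omega) (by omega)),
      if_neg (by rw [dvd_shift (by omega) hnN hk]; exact hkn)]
    ring
  have hUbound : ∀ k : ℕ, ‖U k‖ ≤ 2 * N := by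
    intro k
    refine (norm_sum_le _ _).trans ?_
    have h1 : ∀ j ∈ Finset.range N, ‖ζ ^ (j * k) * ((W j : ℝ) : ℂ)‖ ≤ 2 := by
      intro j _
      rw [norm_mul, norm_pow, hζnorm, one_pow, one_mul, Complex.norm_real,
        Real.norm_eq_abs, abs_of_nonneg (hWrange j).1]
      exact (hWrange j).2
    refine (Finset.sum_le_sum h1).trans ?_
    rw [Finset.sum_const, Finset.card_range, nsmul_eq_mul]
    ring_nf
    exact le_refl _
  set V : ℕ → ℂ := fun k => U k - (if k = 0 then (N:ℂ) else 0)
      - (if k = n then (N:ℂ) * (starRingEnd ℂ) l / 2 else 0) with hVdef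
  have hV0 : ∀ k : ℕ, k < N - n → V k = 0 := by
    intro k hk
    simp only [hVdef]
    by_cases h0 : k = 0
    · rw [h0]
      simp only [if_pos rfl, if_neg (show ¬((0:ℕ) = n) from by omega), hU0]
      simp
    by_cases hkn : k = n
    · rw [hkn]
      simp only [if_pos rfl, if_neg (show ¬(n = 0) from by omega), hUn]
      simp
    · simp only [if_neg h0, if_neg hkn, hUk k (by omega) hk hkn]
      simp
  have hVb : ∀ k : ℕ, ‖V k‖ ≤ 4 * N := by
    intro k
    simp only [hVdef]
    refine (norm_sub_le _ _).trans ?_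
    have h1 : ‖U k - (if k = 0 then (N:ℂ) else 0)‖ ≤ 3 * N := by
      refine (norm_sub_le _ _).trans ?_
      have h2 : ‖(if k = 0 then (N:ℂ) else 0)‖ ≤ N := by
        split <;> simp
      linarith [hUbound k]
    have h3 : ‖(if k = n then (N:ℂ) * (starRingEnd ℂ) l / 2 else 0)‖ ≤ N := by
      split
      · rw [norm_div, norm_mul, Complex.norm_natCast, RCLike.norm_conj, hl]
        simp
      · simp
    linarith
  -- summability of the tail part
  set g : ℕ → ℝ := fun k => (1 + ‖c k‖) * r ^ k with hgdef
  have hg : Summable g := by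
    have h1 := summable_norm_mul_pow (fun z hz => (hw z hz).summable) hr0 hr1
    have h2 := summable_geometric_of_lt_one hr0 hr1
    refine (h2.add h1).congr fun k => ?_
    simp only [hgdef]; ring
  have hrpow : ∀ k : ℕ, ‖(r:ℂ) ^ k‖ = r ^ k := by
    intro k
    rw [norm_pow, Complex.norm_real, Real.norm_eq_abs, abs_of_nonneg hr0]
  have hterm : ∀ k : ℕ, ‖p k * (r:ℂ) ^ k * V k‖ ≤ 4 * N * g k := by
    intro k
    rw [norm_mul, norm_mul, hrpow]
    have := mul_le_mul (mul_le_mul (hpnorm k) (le_refl (r ^ k)) (by positivity)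
      (by positivity)) (hVb k) (norm_nonneg _) (by positivity)
    calc ‖p k‖ * r ^ k * ‖V k‖ ≤ (1 + ‖c k‖) * r ^ k * (4 * N) := this
      _ = 4 * N * g k := by simp only [hgdef]; ring
  have hnormsum : Summable (fun k => ‖p k * (r:ℂ) ^ k * V k‖) :=
    Summable.of_nonneg_of_le (fun k => norm_nonneg _) hterm ((hg.mul_left (4 * (N:ℝ))))
  have hsumV : Summable (fun k => p k * (r:ℂ) ^ k * V k) := Summable.of_norm hnormsum
  -- decomposition
  have s1 : HasSum (fun k : ℕ => if k = 0 then p 0 * (N:ℂ) else 0) (p 0 * N) :=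
    hasSum_ite_eq 0 _
  have s2 : HasSum (fun k : ℕ => if k = n then p n * (r:ℂ) ^ n * ((N:ℂ) * (starRingEnd ℂ) l / 2) else 0)
      (p n * (r:ℂ) ^ n * ((N:ℂ) * (starRingEnd ℂ) l / 2)) := hasSum_ite_eq n _
  have stotal := (s1.add s2).add hsumV.hasSum
  have hdecomp : (fun k => p k * (r:ℂ) ^ k * U k)
      = fun k : ℕ => ((if k = 0 then p 0 * (N:ℂ) else 0)
        + (if k = n then p n * (r:ℂ) ^ n * ((N:ℂ) * (starRingEnd ℂ) l / 2) else 0))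
        + p k * (r:ℂ) ^ k * V k := by
    funext k
    simp only [hVdef]
    by_cases h0 : k = 0
    · rw [h0]
      simp only [if_pos rfl, if_neg (show ¬((0:ℕ) = n) from by omega), if_true, eq_self_iff_true]
      ring
    by_cases hkn : k = n
    · rw [hkn]
      simp only [if_pos rfl, if_neg (show ¬(n = 0) from by omega), if_true, eq_self_iff_true]
      ring
    · simp only [if_neg h0, if_neg hkn]
      ring
  have hTeq : T = p 0 * N + p n * (r:ℂ) ^ n * ((N:ℂ) * (starRingEnd ℂ) l / 2)
      + ∑' k, p k * (r:ℂ) ^ k * V k := by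
    refine hsum_main.unique ?_
    rw [hdecomp]
    exact stotal
  -- tail bound
  set M := N - n with hMdef
  have hVt : ‖∑' k, p k * (r:ℂ) ^ k * V k‖ ≤ 4 * N * ∑' j : ℕ, g (j + M) := by
    refine (norm_tsum_le_tsum_norm hnormsum).trans ?_
    have hsplit := Summable.sum_add_tsum_nat_add (f := fun k => ‖p k * (r:ℂ) ^ k * V k‖) M hnormsum
    have hzero : ∑ k ∈ Finset.range M, ‖p k * (r:ℂ) ^ k * V k‖ = 0 :=
      Finset.sum_eq_zero fun k hk => by
        rw [hV0 k (Finset.mem_range.1 hk)]; simp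
    rw [← hsplit, hzero, zero_add]
    have h1 : ∑' j : ℕ, ‖p (j + M) * (r:ℂ) ^ (j + M) * V (j + M)‖
        ≤ ∑' j : ℕ, 4 * N * g (j + M) := by
      refine Summable.tsum_le_tsum (fun j => hterm (j + M)) ((summable_nat_add_iff M).2 hnormsum)
        ((summable_nat_add_iff M).2 (hg.mul_left (4 * (N:ℝ))))
    refine h1.trans ?_
    rw [tsum_mul_left]
  -- compute real parts
  have hp0 : p 0 = ((1 - ‖c 0‖ : ℝ) : ℂ) := by
    have h1 : p 0 = 1 - μ * c 0 := by simp [hpdef]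
    rw [h1, hμc]; push_cast; ring
  have hpn : p n * (starRingEnd ℂ) l = -((‖c n‖ : ℝ) : ℂ) := by
    have h1 : p n = -(μ * c n) := by
      simp only [hpdef]
      rw [if_neg (by omega)]; ring
    rw [h1, show -(μ * c n) * (starRingEnd ℂ) l = -((starRingEnd ℂ) l * (μ * c n)) from by ring,
      hlc]
  have hA : (p 0 * (N:ℂ)).re = (1 - ‖c 0‖) * N := by
    rw [hp0, show ((N:ℕ) : ℂ) = ((N:ℝ) : ℂ) from by push_cast; ring, ← Complex.ofReal_mul,
      Complex.ofReal_re]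
  have hB : p n * (r:ℂ) ^ n * ((N:ℂ) * (starRingEnd ℂ) l / 2)
      = -((‖c n‖ * r ^ n * N / 2 : ℝ) : ℂ) := by
    have h1 : p n * (r:ℂ) ^ n * ((N:ℂ) * (starRingEnd ℂ) l / 2)
        = (p n * (starRingEnd ℂ) l) * ((r:ℂ) ^ n * N / 2) := by ring
    rw [h1, hpn]
    push_cast
    ring
  have hCre : (∑' k, p k * (r:ℂ) ^ k * V k).re ≤ 4 * N * ∑' j : ℕ, g (j + M) := by
    have h1 : |(∑' k, p k * (r:ℂ) ^ k * V k).re| ≤ ‖∑' k, p k * (r:ℂ) ^ k * V k‖ := by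
      exact Complex.abs_re_le_norm _
    rw [abs_le] at h1
    linarith [h1.2, hVt]
  have hTre2 : T.re = (1 - ‖c 0‖) * N - ‖c n‖ * r ^ n * N / 2
      + (∑' k, p k * (r:ℂ) ^ k * V k).re := by
    rw [hTeq, Complex.add_re, Complex.add_re, hA, hB, Complex.neg_re, Complex.ofReal_re]
    ring
  have hfin : ‖c n‖ * r ^ n * N ≤ (2 * (1 - ‖c 0‖) + 8 * ∑' j : ℕ, g (j + M)) * N := by
    nlinarith [hTre, hCre, hTre2]
  simp only [hgdef] at hfin
  exact le_of_mul_le_mul_right hfin hNR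

private lemma exists_phase (y : ℂ) :
    ∃ u : ℂ, ‖u‖ = 1 ∧ (starRingEnd ℂ) u * y = (‖y‖ : ℂ) := by
  by_cases h : y = 0
  · exact ⟨1, norm_one, by simp [h]⟩
  · have hy : ‖y‖ ≠ 0 := norm_ne_zero_iff.2 h
    refine ⟨y / ‖y‖, ?_, ?_⟩
    · rw [norm_div, Complex.norm_real, Real.norm_eq_abs, abs_of_nonneg (norm_nonneg _),
        div_self hy]
    · rw [map_div₀, Complex.conj_ofReal]
      have h1 : (starRingEnd ℂ) y * y = ((‖y‖ ^ 2 : ℝ) : ℂ) := by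
        rw [mul_comm, Complex.mul_conj, Complex.normSq_eq_norm_sq]
      have h2 : ((‖y‖ : ℝ) : ℂ) ≠ 0 := Complex.ofReal_ne_zero.2 hy
      field_simp
      rw [h1]
      rw [sq]
      push_cast
      field_simp

private lemma carath_bound {w : ℂ → ℂ} {c : ℕ → ℂ}
    (hw : ∀ z ∈ Metric.ball (0:ℂ) 1, HasSum (fun n : ℕ => c n * z ^ n) (w z))
    (hb : ∀ z ∈ Metric.ball (0:ℂ) 1, ‖w z‖ ≤ 1)
    {n : ℕ} (hn : 1 ≤ n) : ‖c n‖ ≤ 2 * (1 - ‖c 0‖) := by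
  obtain ⟨u, hu, huc⟩ := exists_phase (c 0)
  obtain ⟨l, hl, hlc'⟩ := exists_phase ((starRingEnd ℂ) u * c n)
  have hμ : ‖(starRingEnd ℂ) u‖ = 1 := by rw [RCLike.norm_conj]; exact hu
  have hlc : (starRingEnd ℂ) l * ((starRingEnd ℂ) u * c n) = (‖c n‖ : ℂ) := by
    rw [hlc', norm_mul, hμ, one_mul]
  have hr : ∀ r : ℝ, 0 ≤ r → r < 1 → ‖c n‖ * r ^ n ≤ 2 * (1 - ‖c 0‖) := by
    intro r hr0 hr1
    set g : ℕ → ℝ := fun k => (1 + ‖c k‖) * r ^ k with hgdef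
    have htail : Filter.Tendsto (fun M : ℕ => ∑' j : ℕ, g (j + M)) atTop (𝓝 0) :=
      tendsto_sum_nat_add g
    have hcomp : Filter.Tendsto
        (fun N : ℕ => 2 * (1 - ‖c 0‖) + 8 * ∑' j : ℕ, g (j + (N - n)))
        atTop (𝓝 (2 * (1 - ‖c 0‖) + 8 * 0)) := by
      refine Filter.Tendsto.const_add _ (Filter.Tendsto.const_mul _ ?_)
      refine htail.comp ?_
      exact Filter.tendsto_atTop_atTop.2 fun b => ⟨b + n, fun x hx => by omega⟩
    have hev : ∀ᶠ N : ℕ in atTop,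
        ‖c n‖ * r ^ n ≤ 2 * (1 - ‖c 0‖) + 8 * ∑' j : ℕ, g (j + (N - n)) := by
      filter_upwards [Filter.eventually_gt_atTop (2 * n)] with N hN
      simp only [hgdef]
      exact carath_key hw hb hn hr0 hr1 hμ hl huc hlc hN
    have := ge_of_tendsto hcomp hev
    simpa using this
  have hseq : Filter.Tendsto (fun m : ℕ => ‖c n‖ * (1 - 1/((m:ℝ)+2)) ^ n) atTop
      (𝓝 (‖c n‖)) := by
    have h2 : Filter.Tendsto (fun m : ℕ => 1/((m:ℝ)+2)) atTop (𝓝 0) := by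
      simp only [one_div]
      refine Filter.Tendsto.inv_tendsto_atTop ?_
      exact Filter.tendsto_atTop_add_const_right _ 2 tendsto_natCast_atTop_atTop
    have h1 : Filter.Tendsto (fun m : ℕ => 1 - 1/((m:ℝ)+2)) atTop (𝓝 1) := by
      simpa using (tendsto_const_nhds.sub h2)
    have := (h1.pow n).const_mul (‖c n‖)
    simpa using this
  refine le_of_tendsto hseq ?_
  filter_upwards with m
  have hm2 : (0:ℝ) < (m:ℝ) + 2 := by positivity
  have hb1 : 1/((m:ℝ)+2) ≤ 1/2 := by
    rw [div_le_div_iff₀ hm2 (by norm_num)]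
    have : (0:ℝ) ≤ (m:ℝ) := Nat.cast_nonneg m
    linarith
  have hb0 : 0 < 1/((m:ℝ)+2) := by positivity
  exact hr _ (by linarith) (by linarith)

set_option maxHeartbeats 1600000 in
theorem majorant_zderiv_plus_self (w : ℂ → ℂ) (c : ℕ → ℂ)
    (hw : ∀ z ∈ Metric.ball (0:ℂ) 1, HasSum (fun n : ℕ => c n * z ^ n) (w z))
    (hb : ∀ z ∈ Metric.ball (0:ℂ) 1, ‖w z‖ ≤ 1)
    (r : ℝ) (hr0 : 0 ≤ r) (hr1 : r ≤ 1 - Real.sqrt (2/3)) :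
    (∑' n : ℕ, ((n:ℝ)+1) * ‖c (n+1)‖ * r ^ (n+1)) +
      ∑' n : ℕ, ‖c n‖ * r ^ n ≤ 1 := by
  have hc0 : w 0 = c 0 := by
    have h := hw 0 (by simp)
    have h2 : HasSum (fun n : ℕ => c n * (0:ℂ) ^ n) (c 0) := by
      have := hasSum_single (f := fun n : ℕ => c n * (0:ℂ) ^ n) 0
        (fun b hb' => by simp [hb', zero_pow hb'])
      simpa using this
    exact h.unique h2
  have ha1 : ‖c 0‖ ≤ 1 := by rw [← hc0]; exact hb 0 (by simp)
  set a := ‖c 0‖ with hadef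
  have hK : ∀ m : ℕ, ‖c (m+1)‖ ≤ 2 * (1 - a) := fun m =>
    carath_bound hw hb (Nat.succ_le_succ (Nat.zero_le m))
  have hK0 : (0:ℝ) ≤ 2 * (1 - a) := by linarith
  have hs0 : 0 < Real.sqrt (2/3) := Real.sqrt_pos.2 (by norm_num)
  have hr1' : r < 1 := by linarith
  have h1r : 0 < 1 - r := by linarith
  have h23 : 2/3 ≤ (1-r)^2 := by
    have h1 : Real.sqrt (2/3) ≤ 1 - r := by linarith
    nlinarith [Real.sq_sqrt (show (0:ℝ) ≤ 2/3 by norm_num), Real.sqrt_nonneg (2/3:ℝ)]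
  -- summability facts
  have hsum2 : Summable (fun m : ℕ => ‖c m‖ * r ^ m) :=
    summable_norm_mul_pow (fun z hz => (hw z hz).summable) hr0 hr1'
  have hshift : Summable (fun m : ℕ => ‖c (m+1)‖ * r ^ (m+1)) :=
    (summable_nat_add_iff 1).2 hsum2
  have hgeom : Summable (fun m : ℕ => r ^ m) := summable_geometric_of_lt_one hr0 hr1'
  have hrn : ‖r‖ < 1 := by rw [Real.norm_eq_abs, abs_of_nonneg hr0]; exact hr1'
  have hng : Summable (fun m : ℕ => (m:ℝ) * r ^ m) := by
    simpa using summable_pow_mul_geometric_of_norm_lt_one 1 hrn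
  have hSB : Summable (fun m : ℕ => ((m:ℝ)+2) * r ^ (m+1)) := by
    refine ((hng.mul_left r).add (hgeom.mul_left (2*r))).congr fun m => ?_
    ring
  have hS1 : Summable (fun m : ℕ => ((m:ℝ)+1) * ‖c (m+1)‖ * r ^ (m+1)) := by
    refine Summable.of_nonneg_of_le (fun m => by positivity) (fun m => ?_)
      (hSB.mul_left (2*(1-a)))
    calc ((m:ℝ)+1) * ‖c (m+1)‖ * r ^ (m+1) ≤ ((m:ℝ)+2) * (2*(1-a)) * r ^ (m+1) := by
          apply mul_le_mul_of_nonneg_right _ (by positivity)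
          exact mul_le_mul (by linarith) (hK m) (norm_nonneg _) (by positivity)
      _ = 2*(1-a) * (((m:ℝ)+2) * r ^ (m+1)) := by ring
  -- main comparison
  have hmain : (∑' m : ℕ, ((m:ℝ)+1) * ‖c (m+1)‖ * r ^ (m+1))
      + (∑' m : ℕ, ‖c (m+1)‖ * r ^ (m+1))
      ≤ 2*(1-a) * ∑' m : ℕ, ((m:ℝ)+2) * r ^ (m+1) := by
    rw [← Summable.tsum_add hS1 hshift, ← tsum_mul_left]
    refine Summable.tsum_le_tsum (fun m => ?_) (hS1.add hshift) (hSB.mul_left _)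
    have he : ((m:ℝ)+1) * ‖c (m+1)‖ * r ^ (m+1) + ‖c (m+1)‖ * r ^ (m+1)
        = ((m:ℝ)+2) * ‖c (m+1)‖ * r ^ (m+1) := by ring
    rw [he]
    calc ((m:ℝ)+2) * ‖c (m+1)‖ * r ^ (m+1) ≤ ((m:ℝ)+2) * (2*(1-a)) * r ^ (m+1) := by
          apply mul_le_mul_of_nonneg_right _ (by positivity)
          exact mul_le_mul_of_nonneg_left (hK m) (by positivity)
      _ = 2*(1-a) * (((m:ℝ)+2) * r ^ (m+1)) := by ring
  -- geometric sums
  have hsA : Summable (fun m : ℕ => ((m:ℝ)+1) * r ^ (m+1)) := by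
    refine ((hng.mul_left r).add (hgeom.mul_left r)).congr fun m => ?_
    ring
  have hsB2 : Summable (fun m : ℕ => r ^ (m+1)) := by
    refine (hgeom.mul_left r).congr fun m => ?_
    rw [pow_succ]; ring
  have hsumval : ∑' m : ℕ, ((m:ℝ)+2) * r ^ (m+1) ≤ 1/2 := by
    have hA : ∑' m : ℕ, ((m:ℝ)+1) * r ^ (m+1) = r / (1-r)^2 := by
      have h1 := tsum_coe_mul_geometric_of_norm_lt_one hrn
      rw [← h1, Summable.tsum_eq_zero_add hng]
      push_cast
      simp
    have hB : ∑' m : ℕ, r ^ (m+1) = r / (1-r) := by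
      have h1 : (fun m : ℕ => r ^ (m+1)) = fun m : ℕ => r * r ^ m := by
        funext m; rw [pow_succ]; ring
      rw [h1, tsum_mul_left, tsum_geometric_of_lt_one hr0 hr1', div_eq_mul_inv]
    have hsplit : ∑' m : ℕ, ((m:ℝ)+2) * r ^ (m+1)
        = (∑' m : ℕ, ((m:ℝ)+1) * r ^ (m+1)) + ∑' m : ℕ, r ^ (m+1) := by
      rw [← Summable.tsum_add hsA hsB2]
      congr 1; funext m; ring
    rw [hsplit, hA, hB]
    rw [div_add_div _ _ (by positivity) (ne_of_gt h1r), div_le_iff₀ (by positivity)]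
    nlinarith [mul_nonneg (show (0:ℝ) ≤ (1-r)^2 - 2/3 by linarith) h1r.le]
  have hT2 : ∑' m : ℕ, ‖c m‖ * r ^ m = a + ∑' m : ℕ, ‖c (m+1)‖ * r ^ (m+1) := by
    rw [Summable.tsum_eq_zero_add hsum2]
    simp [hadef]
  have hfin : 2*(1-a) * ∑' m : ℕ, ((m:ℝ)+2) * r ^ (m+1) ≤ 2*(1-a) * (1/2) :=
    mul_le_mul_of_nonneg_left hsumval hK0
  rw [hT2]
  linarith [hmain, hfin]
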